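/- Let p : X̂ → X be an lpc₀-covering map with p_*π₁(X̂, x̂₀) = H ≤ π₁(X, x₀), where X is locally path connected and H-SLT at x₀. If the fiber p⁻¹(x₀) is finite, then p is a semicovering map. -/

import Mathlib

open Set TopologicalSpace unitInterval

universe u

namespace SLTF

attribute [local instance] Path.Homotopic.setoid

variable {X : Type u} [TopologicalSpace X]

/-- The homotopy class of a loop as an element of the fundamental group. -/
noncomputable def fl {x : X} (γ : Path x x) : FundamentalGroup X x :=
  @FundamentalGroup.fromPath X _ x ⟦γ⟧

/-- Multiplication of fundamental-group elements in path-concatenation order: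
`pmul a b` is the class of "`a` followed by `b`". -/
noncomputable def pmul {x : X} (a b : FundamentalGroup X x) : FundamentalGroup X x :=
  @FundamentalGroup.fromPath X _ x
    (Path.Homotopic.Quotient.trans (@FundamentalGroup.toPath X _ x a)
      (@FundamentalGroup.toPath X _ x b))

/-- A path in `X` starting at the base point `x`, recorded together with its end point. -/
structure PPath (X : Type u) [TopologicalSpace X] (x : X) where
  target : X
  path : Path x target

/-- Two paths starting at `x` are identified when they have the same end point and the
class of `α ⬝ β⁻¹` satisfies the predicate `P` (e.g. membership in a subgroup `H`). -/
def HRel (x : X) (P : Path x x → Prop) (α β : PPath X x) : Prop :=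
  ∃ h : α.target = β.target, P (α.path.trans ((β.path.cast rfl h).symm))

/-- The set `X̃` of `P`-equivalence classes of paths starting at `x`. -/
def Xtilde (x : X) (P : Path x x → Prop) : Type u := Quot (HRel x P)

/-- The class of a path in `X̃`. -/
def mkX (x : X) (P : Path x x → Prop) (α : PPath X x) : Xtilde x P := Quot.mk _ α

/-- The basic whisker-open set `([α], U)`: all classes of prolongations of `α` by a path in `U`. -/
def whBasic (x : X) (P : Path x x → Prop) (α : PPath X x) (U : Set X) : Set (Xtilde x P) :=
  { q | ∃ (y : X) (β : Path α.target y), range ⇑β ⊆ U ∧ q = mkX x P ⟨y, α.path.trans β⟩ }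

/-- The whisker topology on `X̃`, generated by the sets `([α], U)` for `U` an open
neighbourhood of the end point of `α`. -/
instance whTop (x : X) (P : Path x x → Prop) : TopologicalSpace (Xtilde x P) :=
  generateFrom
    { S | ∃ (α : PPath X x) (U : Set X), IsOpen U ∧ α.target ∈ U ∧ S = whBasic x P α U }

/-- The endpoint projection `p : X̃ → X`. -/
def endpt (x : X) (P : Path x x → Prop) : Xtilde x P → X :=
  Quot.lift (fun α => α.target) (fun _ _ h => h.elim fun e _ => e)

/-- The space of paths in `X` starting at `x`, with the compact-open topology. -/
def PSp (X : Type u) [TopologicalSpace X] (x : X) : Type u := { f : C(I, X) // f 0 = x }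

instance (x : X) : TopologicalSpace (PSp X x) := instTopologicalSpaceSubtype

/-- The natural surjection from the path space onto `X̃`. -/
def toXt (x : X) (P : Path x x → Prop) : PSp X x → Xtilde x P :=
  fun f => mkX x P ⟨f.1 1, ⟨f.1, f.2, rfl⟩⟩

/-- The quotient of the compact-open topology on `X̃`. -/
def topTop (x : X) (P : Path x x → Prop) : TopologicalSpace (Xtilde x P) :=
  coinduced (toXt x P) inferInstance

/-- Membership in a subgroup `H`, as a predicate on loops. -/
noncomputable def loopMem (x : X) (H : Subgroup (FundamentalGroup X x)) : Path x x → Prop :=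
  fun γ => fl γ ∈ H

/-- `X̃_H`, the classes of paths starting at `x₀` modulo `H`. -/
abbrev XtildeH (x₀ : X) (H : Subgroup (FundamentalGroup X x₀)) : Type u :=
  Xtilde x₀ (loopMem x₀ H)

/-- The fiber of the endpoint projection over `y`, with the subspace (whisker) topology. -/
abbrev Fib (x : X) (P : Path x x → Prop) (y : X) : Type u :=
  { q : Xtilde x P // endpt x P q = y }

/-- The class in the fiber over `y` of a path from `x` to `y`. -/
def mkFib (x : X) (P : Path x x → Prop) {y : X} (δ : Path x y) : Fib x P y :=
  ⟨mkX x P ⟨y, δ⟩, rfl⟩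

/-- The whisker topology on the fundamental group `π₁(X, x)`: basic neighbourhoods of `a`
are the sets `{a ⋆ [γ] : γ a loop in U at x}` for `U` an open neighbourhood of `x`. -/
noncomputable def whPi1 (x : X) : TopologicalSpace (FundamentalGroup X x) :=
  generateFrom
    { S | ∃ (a : FundamentalGroup X x) (U : Set X), IsOpen U ∧ x ∈ U ∧
        S = { b | ∃ γ : Path x x, range ⇑γ ⊆ U ∧ b = pmul a (fl γ) } }

/-- The quotient topology on `π₁(X, x)` induced from the loop space with the
compact-open topology. -/
noncomputable def qtopPi1 (x : X) : TopologicalSpace (FundamentalGroup X x) :=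
  coinduced (fun γ : Path x x => fl γ) inferInstance

/-- `X` is `H`-SLT at `x₀`. -/
noncomputable def IsHSLTAt (x₀ : X) (H : Subgroup (FundamentalGroup X x₀)) : Prop :=
  ∀ (y : X) (α : Path x₀ y) (U : Set X), IsOpen U → x₀ ∈ U →
    ∃ V : Set X, IsOpen V ∧ y ∈ V ∧
      ∀ β : Path y y, range ⇑β ⊆ V →
        ∃ γ : Path x₀ x₀, range ⇑γ ⊆ U ∧
          fl ((α.trans (β.trans α.symm)).trans γ.symm) ∈ H

/-- `X` is SLT at `x`. -/
def IsSLTAt (X : Type u) [TopologicalSpace X] (x : X) : Prop :=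
  ∀ (y : X) (α : Path x y) (U : Set X), IsOpen U → x ∈ U →
    ∃ V : Set X, IsOpen V ∧ y ∈ V ∧
      ∀ β : Path y y, range ⇑β ⊆ V →
        ∃ γ : Path x x, range ⇑γ ⊆ U ∧ (α.trans (β.trans α.symm)).Homotopic γ

/-- `X` is an SLT space. -/
def IsSLT (X : Type u) [TopologicalSpace X] : Prop := ∀ x : X, IsSLTAt X x

/-- `α` (a path from `x` to `y`) is an `H`-SLT path: for every path `lam` from `x₀` to `x`
and open `U ∋ x` there is an open `V ∋ y` such that every loop `β` in `V` at `y` transfers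
to a loop `γ` in `U` at `x` with `[α ⋆ β ⋆ α⁻¹ ⋆ γ⁻¹] ∈ [lam⁻¹ H lam]`, i.e.
`[lam ⋆ (α ⋆ β ⋆ α⁻¹ ⋆ γ⁻¹) ⋆ lam⁻¹] ∈ H`. -/
noncomputable def IsHSLTPath (x₀ : X) (H : Subgroup (FundamentalGroup X x₀)) {x y : X}
    (α : Path x y) : Prop :=
  ∀ (lam : Path x₀ x) (U : Set X), IsOpen U → x ∈ U →
    ∃ V : Set X, IsOpen V ∧ y ∈ V ∧
      ∀ β : Path y y, range ⇑β ⊆ V →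
        ∃ γ : Path x x, range ⇑γ ⊆ U ∧
          fl (lam.trans ((((α.trans (β.trans α.symm)).trans γ.symm)).trans lam.symm)) ∈ H

/-- `X` is an `H`-SLT space: for every `x` and every path `lam` from `x₀` to `x`, `X` is
`[lam⁻¹ H lam]`-SLT at `x`. -/
noncomputable def IsHSLTSpace (x₀ : X) (H : Subgroup (FundamentalGroup X x₀)) : Prop :=
  ∀ (x y : X) (α : Path x y), IsHSLTPath x₀ H α

/-- Membership in the conjugate subgroup `[lam⁻¹ H lam]` of `π₁(X, x)`,
as a predicate on loops at `x`. -/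
noncomputable def conjMem (x₀ : X) (H : Subgroup (FundamentalGroup X x₀)) {x : X}
    (lam : Path x₀ x) : Path x x → Prop :=
  fun δ => fl (lam.trans (δ.trans lam.symm)) ∈ H

/-- `X` is homotopically Hausdorff relative to `H`. -/
noncomputable def HomHausdorffRel (x₀ : X) (H : Subgroup (FundamentalGroup X x₀)) : Prop :=
  ∀ (y : X) (α : Path x₀ y) (g : FundamentalGroup X x₀), g ∉ H →
    ∃ U : Set X, IsOpen U ∧ y ∈ U ∧
      ∀ γ : Path y y, range ⇑γ ⊆ U →
        ¬ ∃ h ∈ H, fl (α.trans (γ.trans α.symm)) = pmul h g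

/-- `X` is homotopically path Hausdorff relative to `H`. -/
noncomputable def HomPathHausdorffRel (x₀ : X) (H : Subgroup (FundamentalGroup X x₀)) : Prop :=
  ∀ (y : X) (α β : Path x₀ y), fl (α.trans β.symm) ∉ H →
    ∃ (n : ℕ) (t : Fin (n + 1) → I) (U : Fin n → Set X),
      t 0 = 0 ∧ t (Fin.last n) = 1 ∧ StrictMono t ∧
      (∀ i : Fin n, IsOpen (U i)) ∧
      (∀ i : Fin n, ⇑α '' Set.Icc (t i.castSucc) (t i.succ) ⊆ U i) ∧
      ∀ γ : Path x₀ y,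
        (∀ i : Fin n, ⇑γ '' Set.Icc (t i.castSucc) (t i.succ) ⊆ U i) →
        (∀ i : Fin (n + 1), γ (t i) = α (t i)) →
        fl (γ.trans β.symm) ∉ H

/-- The endpoint projection `p : X̃ → X` (with the whisker topology on `X̃`) has the
unique path lifting property. -/
def UPLP (x : X) (P : Path x x → Prop) : Prop :=
  ∀ g₁ g₂ : C(I, Xtilde x P), g₁ 0 = g₂ 0 →
    (∀ t, endpt x P (g₁ t) = endpt x P (g₂ t)) → g₁ = g₂

/-- A semicovering map: a local homeomorphism with (continuous) unique lifting of paths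
and of homotopies. -/
structure IsSemicovering {Y : Type u} [TopologicalSpace Y] (p : Y → X) : Prop where
  localHomeo : IsLocalHomeomorph p
  pathLift : ∀ (y : Y) (γ : C(I, X)), γ 0 = p y →
    ∃! γh : C(I, Y), γh 0 = y ∧ ∀ t, p (γh t) = γ t
  contPathLift : ∀ y : Y, ∃ L : { γ : C(I, X) // γ 0 = p y } → C(I, Y),
    Continuous L ∧ ∀ γ, (L γ) 0 = y ∧ ∀ t, p ((L γ) t) = (γ : C(I, X)) t
  homotopyLift : ∀ (y : Y) (Φ : C(I × I, X)), Φ (0, 0) = p y →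
    ∃! Φh : C(I × I, Y), Φh (0, 0) = y ∧ ∀ z, p (Φh z) = Φ z
  contHomotopyLift : ∀ y : Y, ∃ L : { Φ : C(I × I, X) // Φ (0, 0) = p y } → C(I × I, Y),
    Continuous L ∧ ∀ Φ, (L Φ) (0, 0) = y ∧ ∀ z, p ((L Φ) z) = (Φ : C(I × I, X)) z

/-- An `lpc₀`-covering map with `p₊π₁(Y, ·) = H`: a map which is equivalent, as a map
over `X`, to the endpoint projection `p_H : X̃_H → X` having the unique path lifting
property (with `Y` path connected and locally path connected). -/
structure IsLpc0Covering {Y : Type u} [TopologicalSpace Y] (p : Y → X) (x₀ : X)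
    (H : Subgroup (FundamentalGroup X x₀)) : Prop where
  pathConnected : PathConnectedSpace Y
  locPathConnected : LocPathConnectedSpace Y
  uplp : UPLP x₀ (loopMem x₀ H)
  equiv : ∃ φ : Y ≃ₜ XtildeH x₀ H, ∀ y, endpt x₀ (loopMem x₀ H) (φ y) = p y

/-- The homomorphism induced by `p` on fundamental groups, as a function. -/
noncomputable def pStar {Y : Type u} [TopologicalSpace Y] (p : C(Y, X)) (y₀ : Y) :
    FundamentalGroup Y y₀ → FundamentalGroup X (p y₀) :=
  fun g => @FundamentalGroup.fromPath X _ (p y₀)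
    (Path.Homotopic.Quotient.map (@FundamentalGroup.toPath Y _ y₀ g) p)


open CategoryTheory

/-! ### Stage 1: groupoid calculus -/

/-- The class of a path as an arrow in the fundamental groupoid. -/
noncomputable def arr {x y : X} (γ : Path x y) :
    FundamentalGroupoid.mk x ⟶ FundamentalGroupoid.mk y := ⟦γ⟧

lemma arr_trans {x y z : X} (γ : Path x y) (δ : Path y z) :
    arr (γ.trans δ) = arr γ ≫ arr δ := by
  rw [FundamentalGroupoid.comp_eq]; rfl

lemma arr_symm {x y : X} (γ : Path x y) :
    arr γ.symm = CategoryTheory.Groupoid.inv (arr γ) := rfl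

lemma arr_refl (x : X) : arr (Path.refl x) = 𝟙 (FundamentalGroupoid.mk x) := rfl

lemma arr_eq_iff {x y : X} {γ δ : Path x y} : arr γ = arr δ ↔ γ.Homotopic δ := by
  constructor
  · exact fun h => Quotient.exact h
  · exact fun h => Quotient.sound h

/-- Build a fundamental-group element from a loop arrow. -/
noncomputable def fg {x : X} (a : FundamentalGroupoid.mk x ⟶ FundamentalGroupoid.mk x) :
    FundamentalGroup X x := @FundamentalGroup.fromArrow X _ x a

lemma fg_hom {x : X} (a : FundamentalGroupoid.mk x ⟶ FundamentalGroupoid.mk x) :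
    fg a = a := rfl

lemma fg_inj {x : X} {a b : FundamentalGroupoid.mk x ⟶ FundamentalGroupoid.mk x}
    (h : fg a = fg b) : a = b := h

lemma fl_eq_fg {x : X} (γ : Path x x) : fl γ = fg (arr γ) := rfl

lemma fg_comp {x : X} (a b : FundamentalGroupoid.mk x ⟶ FundamentalGroupoid.mk x) :
    fg (a ≫ b) = fg b * fg a := rfl

lemma fg_inv {x : X} (a : FundamentalGroupoid.mk x ⟶ FundamentalGroupoid.mk x) :
    fg (CategoryTheory.Groupoid.inv a) = (fg a)⁻¹ := rfl

lemma fg_one {x : X} : fg (𝟙 (FundamentalGroupoid.mk x)) = (1 : FundamentalGroup X x) :=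
  rfl

lemma pmul_eq {x : X} (a b : FundamentalGroup X x) : pmul a b = b * a :=
  rfl

section MemH
variable {x : X} {H : Subgroup (FundamentalGroup X x)}

lemma fg_comp_mem {a b : FundamentalGroupoid.mk x ⟶ FundamentalGroupoid.mk x}
    (ha : fg a ∈ H) (hb : fg b ∈ H) : fg (a ≫ b) ∈ H := by
  rw [fg_comp]; exact mul_mem hb ha

lemma fg_inv_mem {a : FundamentalGroupoid.mk x ⟶ FundamentalGroupoid.mk x}
    (ha : fg a ∈ H) : fg (CategoryTheory.Groupoid.inv a) ∈ H := by
  rw [fg_inv]; exact inv_mem ha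

lemma fg_one_mem : fg (𝟙 (FundamentalGroupoid.mk x)) ∈ H := by
  rw [fg_one]; exact one_mem H

end MemH

/-! ### Stage 2: the space of H-classes of paths -/

section Xt

variable (x₀ : X) (H : Subgroup (FundamentalGroup X x₀))

lemma loopMem_def (γ : Path x₀ x₀) : loopMem x₀ H γ ↔ fg (arr γ) ∈ H := Iff.rfl

lemma path_cast_rfl_rfl {x y : X} (γ : Path x y) : γ.cast rfl rfl = γ := rfl

lemma hrel_equivalence : Equivalence (HRel x₀ (loopMem x₀ H)) := by
  constructor
  · rintro ⟨y, ρ⟩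
    refine ⟨rfl, ?_⟩
    rw [path_cast_rfl_rfl, loopMem_def, arr_trans, arr_symm, CategoryTheory.Groupoid.comp_inv]
    exact fg_one_mem
  · rintro ⟨ya, ρa⟩ ⟨yb, ρb⟩ ⟨h, hp⟩
    dsimp at h; subst h
    rw [path_cast_rfl_rfl] at hp
    refine ⟨rfl, ?_⟩
    rw [path_cast_rfl_rfl, loopMem_def, arr_trans, arr_symm]
    rw [loopMem_def, arr_trans, arr_symm] at hp
    have := fg_inv_mem (H := H) hp
    simpa [CategoryTheory.Groupoid.inv_eq_inv] using this
  · rintro ⟨ya, ρa⟩ ⟨yb, ρb⟩ ⟨yc, ρc⟩ ⟨h1, hp1⟩ ⟨h2, hp2⟩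
    dsimp at h1 h2; subst h1; subst h2
    rw [path_cast_rfl_rfl] at hp1 hp2
    refine ⟨rfl, ?_⟩
    rw [path_cast_rfl_rfl, loopMem_def, arr_trans, arr_symm]
    rw [loopMem_def, arr_trans, arr_symm] at hp1 hp2
    have := fg_comp_mem (H := H) hp1 hp2
    simpa [CategoryTheory.Groupoid.inv_eq_inv] using this

variable {x₀ H}

lemma mk_eq_mk_iff {y : X} {δ δ' : Path x₀ y} :
    mkX x₀ (loopMem x₀ H) ⟨y, δ⟩ = mkX x₀ (loopMem x₀ H) ⟨y, δ'⟩ ↔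
      fg (arr δ ≫ CategoryTheory.Groupoid.inv (arr δ')) ∈ H := by
  rw [mkX, mkX]
  show @Eq (Quot (HRel x₀ (loopMem x₀ H))) _ _ ↔ _
  rw [Quot.eq, Equivalence.eqvGen_iff (hrel_equivalence x₀ H)]
  constructor
  · rintro ⟨h, hp⟩
    rw [path_cast_rfl_rfl, loopMem_def, arr_trans, arr_symm] at hp
    exact hp
  · intro h
    refine ⟨rfl, ?_⟩
    rw [path_cast_rfl_rfl, loopMem_def, arr_trans, arr_symm]
    exact h

lemma mk_eq_of_homotopic {y : X} {δ δ' : Path x₀ y} (h : δ.Homotopic δ') :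
    mkX x₀ (loopMem x₀ H) ⟨y, δ⟩ = mkX x₀ (loopMem x₀ H) ⟨y, δ'⟩ := by
  rw [mk_eq_mk_iff, arr_eq_iff.2 h, CategoryTheory.Groupoid.comp_inv]
  exact fg_one_mem

/-- Extending two `H`-equivalent paths by the same path yields `H`-equivalent paths. -/
lemma mk_trans_congr {y z : X} {δ δ' : Path x₀ y} (β : Path y z)
    (h : mkX x₀ (loopMem x₀ H) ⟨y, δ⟩ = mkX x₀ (loopMem x₀ H) ⟨y, δ'⟩) :
    mkX x₀ (loopMem x₀ H) ⟨z, δ.trans β⟩ = mkX x₀ (loopMem x₀ H) ⟨z, δ'.trans β⟩ := by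
  rw [mk_eq_mk_iff] at h ⊢
  have : arr (δ.trans β) ≫ CategoryTheory.Groupoid.inv (arr (δ'.trans β)) =
      arr δ ≫ CategoryTheory.Groupoid.inv (arr δ') := by
    simp [arr_trans, CategoryTheory.Groupoid.inv_eq_inv]
  rw [this]; exact h

lemma mk_trans_assoc {y z w : X} (δ : Path x₀ y) (β : Path y z) (β' : Path z w) :
    mkX x₀ (loopMem x₀ H) ⟨w, (δ.trans β).trans β'⟩ =
      mkX x₀ (loopMem x₀ H) ⟨w, δ.trans (β.trans β')⟩ :=
  mk_eq_of_homotopic ⟨Path.Homotopy.transAssoc δ β β'⟩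

lemma mk_trans_refl {y : X} (δ : Path x₀ y) :
    mkX x₀ (loopMem x₀ H) ⟨y, δ.trans (Path.refl y)⟩ = mkX x₀ (loopMem x₀ H) ⟨y, δ⟩ :=
  mk_eq_of_homotopic ⟨Path.Homotopy.transRefl δ⟩

lemma mk_trans_symm {y z : X} (δ : Path x₀ y) (β : Path y z) :
    mkX x₀ (loopMem x₀ H) ⟨y, (δ.trans β).trans β.symm⟩ = mkX x₀ (loopMem x₀ H) ⟨y, δ⟩ := by
  rw [mk_eq_mk_iff]
  have : arr ((δ.trans β).trans β.symm) = arr δ := by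
    simp [arr_trans, arr_symm, CategoryTheory.Groupoid.inv_eq_inv]
  rw [this, CategoryTheory.Groupoid.comp_inv]
  exact fg_one_mem

lemma endpt_mk (a : PPath X x₀) : endpt x₀ (loopMem x₀ H) (mkX x₀ (loopMem x₀ H) a) = a.target :=
  rfl

lemma target_eq_of_mk_eq {a b : PPath X x₀}
    (h : mkX x₀ (loopMem x₀ H) a = mkX x₀ (loopMem x₀ H) b) : a.target = b.target :=
  congrArg (endpt x₀ (loopMem x₀ H)) h

/-! whisker basic sets -/

lemma self_mem_whBasic {α : PPath X x₀} {U : Set X} (h : α.target ∈ U) :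
    mkX x₀ (loopMem x₀ H) α ∈ whBasic x₀ (loopMem x₀ H) α U := by
  refine ⟨α.target, Path.refl α.target, ?_, ?_⟩
  · rw [Path.refl_range]; simpa using h
  · exact (mk_trans_refl α.path).symm

lemma whBasic_mono (α : PPath X x₀) {U V : Set X} (h : U ⊆ V) :
    whBasic x₀ (loopMem x₀ H) α U ⊆ whBasic x₀ (loopMem x₀ H) α V := by
  rintro q ⟨y, β, hβ, rfl⟩
  exact ⟨y, β, hβ.trans h, rfl⟩

lemma whBasic_isOpen {α : PPath X x₀} {U : Set X} (hU : IsOpen U) (h : α.target ∈ U) :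
    IsOpen (whBasic x₀ (loopMem x₀ H) α U) :=
  TopologicalSpace.isOpen_generateFrom_of_mem ⟨α, U, hU, h, rfl⟩

/-- If the class of `ρ` belongs to `([α], U)` then `([ρ], U) ⊆ ([α], U)`. -/
lemma whBasic_subset_of_mem {α : PPath X x₀} {U : Set X} {y : X} {ρ : Path x₀ y}
    (h : mkX x₀ (loopMem x₀ H) ⟨y, ρ⟩ ∈ whBasic x₀ (loopMem x₀ H) α U) :
    whBasic x₀ (loopMem x₀ H) ⟨y, ρ⟩ U ⊆ whBasic x₀ (loopMem x₀ H) α U := by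
  obtain ⟨y', β, hβ, hq⟩ := h
  have hy : y = y' := target_eq_of_mk_eq hq
  subst hy
  rintro q ⟨z, β', hβ', rfl⟩
  refine ⟨z, β.trans β', ?_, ?_⟩
  · rw [Path.trans_range]; exact union_subset hβ hβ'
  · calc mkX x₀ (loopMem x₀ H) ⟨z, ρ.trans β'⟩
        = mkX x₀ (loopMem x₀ H) ⟨z, (α.path.trans β).trans β'⟩ := mk_trans_congr β' hq
      _ = mkX x₀ (loopMem x₀ H) ⟨z, α.path.trans (β.trans β')⟩ := mk_trans_assoc _ _ _

lemma whisker_isBasis :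
    TopologicalSpace.IsTopologicalBasis
      { S | ∃ (α : PPath X x₀) (U : Set X), IsOpen U ∧ α.target ∈ U ∧
          S = whBasic x₀ (loopMem x₀ H) α U } := by
  refine ⟨?_, ?_, rfl⟩
  · rintro S₁ ⟨α, U, hU, hα, rfl⟩ S₂ ⟨α', U', hU', hα', rfl⟩ q ⟨h1, h2⟩
    obtain ⟨y, β, hβ, rfl⟩ := h1
    have hyU : y ∈ U := hβ ⟨1, β.target⟩
    have hyU' : y ∈ U' := by
      obtain ⟨y', β', hβ', hq⟩ := h2
      have : y = y' := target_eq_of_mk_eq hq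
      subst this
      exact hβ' ⟨1, β'.target⟩
    refine ⟨whBasic x₀ (loopMem x₀ H) ⟨y, α.path.trans β⟩ (U ∩ U'),
      ⟨⟨y, α.path.trans β⟩, U ∩ U', hU.inter hU', ⟨hyU, hyU'⟩, rfl⟩,
      self_mem_whBasic ⟨hyU, hyU'⟩, subset_inter ?_ ?_⟩
    · exact (whBasic_mono _ inter_subset_left).trans
        (whBasic_subset_of_mem ⟨y, β, hβ, rfl⟩)
    · exact (whBasic_mono _ inter_subset_right).trans (whBasic_subset_of_mem h2)
  · refine eq_univ_of_forall fun q => ?_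
    induction q using Quot.ind with
    | _ a =>
      exact mem_sUnion.2 ⟨whBasic x₀ (loopMem x₀ H) a univ,
        ⟨a, univ, isOpen_univ, mem_univ _, rfl⟩,
        self_mem_whBasic (mem_univ _)⟩

lemma continuous_endpt : Continuous (endpt x₀ (loopMem x₀ H)) := by
  rw [continuous_def]
  intro O hO
  rw [isOpen_iff_forall_mem_open]
  intro q hq
  induction q using Quot.ind with
  | _ a =>
    refine ⟨whBasic x₀ (loopMem x₀ H) a O, ?_, whBasic_isOpen hO hq, self_mem_whBasic hq⟩
    rintro q' ⟨y, β, hβ, rfl⟩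
    have : y ∈ O := hβ ⟨1, β.target⟩
    exact this

end Xt
/-! ### Stage 3: fibers and the stability lemma -/

section Fib3

variable {x₀ : X} {H : Subgroup (FundamentalGroup X x₀)}

open Classical in
/-- Extension of classes of paths ending at `y` by a fixed path `δ : y ⤳ z`. -/
noncomputable def extMap {y z : X} (δ : Path y z) :
    Xtilde x₀ (loopMem x₀ H) → Xtilde x₀ (loopMem x₀ H) :=
  Quot.lift
    (fun a => if h : a.target = y then
        mkX x₀ (loopMem x₀ H) ⟨z, (a.path.cast rfl h.symm).trans δ⟩
      else Quot.mk _ a)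
    (by
      rintro ⟨ta, ρa⟩ ⟨tb, ρb⟩ hab
      obtain ⟨ht, hP⟩ := id hab
      dsimp at ht ⊢
      subst ht
      have hmk : mkX x₀ (loopMem x₀ H) ⟨ta, ρa⟩ = mkX x₀ (loopMem x₀ H) ⟨ta, ρb⟩ :=
        Quot.sound hab
      by_cases h : ta = y
      · subst h
        simp only [↓reduceDIte]
        simp only [path_cast_rfl_rfl]
        exact mk_trans_congr δ hmk
      · simp only [h, ↓reduceDIte]
        exact hmk)

lemma extMap_mk {y z : X} (δ : Path y z) (ρ : Path x₀ y) :
    extMap δ (mkX x₀ (loopMem x₀ H) ⟨y, ρ⟩) = mkX x₀ (loopMem x₀ H) ⟨z, ρ.trans δ⟩ :=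
  dif_pos rfl

lemma endpt_extMap_mem {y z : X} (δ : Path y z) {q : Xtilde x₀ (loopMem x₀ H)}
    (hq : endpt x₀ (loopMem x₀ H) q = y) : endpt x₀ (loopMem x₀ H) (extMap δ q) = z := by
  induction q using Quot.ind with
  | _ a =>
    obtain ⟨t, ρ⟩ := a
    have ht : t = y := hq
    subst ht
    show endpt x₀ (loopMem x₀ H) (extMap δ (mkX x₀ (loopMem x₀ H) ⟨t, ρ⟩)) = z
    rw [extMap_mk]
    rfl

lemma extMap_extMap {y z : X} (δ : Path y z) {q : Xtilde x₀ (loopMem x₀ H)}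
    (hq : endpt x₀ (loopMem x₀ H) q = y) : extMap δ.symm (extMap δ q) = q := by
  induction q using Quot.ind with
  | _ a =>
    obtain ⟨t, ρ⟩ := a
    have ht : t = y := hq
    subst ht
    show extMap δ.symm (extMap δ (mkX x₀ (loopMem x₀ H) ⟨t, ρ⟩)) = mkX x₀ (loopMem x₀ H) ⟨t, ρ⟩
    rw [extMap_mk, extMap_mk]
    exact mk_trans_symm ρ δ

/-- Finiteness of the fiber transfers along paths. -/
lemma fiber_finite_of_fiber_finite {y z : X} (δ : Path y z)
    (hfin : {q : Xtilde x₀ (loopMem x₀ H) | endpt x₀ (loopMem x₀ H) q = y}.Finite) :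
    {q : Xtilde x₀ (loopMem x₀ H) | endpt x₀ (loopMem x₀ H) q = z}.Finite := by
  have himg : extMap δ.symm '' {q | endpt x₀ (loopMem x₀ H) q = z} ⊆
      {q | endpt x₀ (loopMem x₀ H) q = y} := by
    rintro _ ⟨q, hq, rfl⟩
    exact endpt_extMap_mem δ.symm hq
  refine Set.Finite.of_finite_image (hfin.subset himg) ?_
  intro q hq q' hq' h
  have := congrArg (extMap δ.symm.symm) h
  rw [extMap_extMap δ.symm hq, extMap_extMap δ.symm hq'] at this
  exact this

/-- **Key stability lemma**: if the endpoint projection has unique path lifting and the fiber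
over `y` is finite, then every point of `X̃` over `y` has a "stable" neighbourhood basis set:
small loops at `y` do not move the class. -/
lemma stable_nbhd (hU : UPLP x₀ (loopMem x₀ H)) {y : X} (ρ : Path x₀ y)
    (hfin : {q : Xtilde x₀ (loopMem x₀ H) | endpt x₀ (loopMem x₀ H) q = y}.Finite) :
    ∃ V : Set X, IsOpen V ∧ y ∈ V ∧ ∀ β : Path y y, range ⇑β ⊆ V →
      mkX x₀ (loopMem x₀ H) ⟨y, ρ.trans β⟩ = mkX x₀ (loopMem x₀ H) ⟨y, ρ⟩ := by
  classical
  -- Step A : a "bad" point must equal the class of ρ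
  have stepA : ∀ q : Xtilde x₀ (loopMem x₀ H),
      (∀ V : Set X, IsOpen V → y ∈ V → ∃ β : Path y y, range ⇑β ⊆ V ∧
        mkX x₀ (loopMem x₀ H) ⟨y, ρ.trans β⟩ = q) → q = mkX x₀ (loopMem x₀ H) ⟨y, ρ⟩ := by
    intro q hbad
    obtain ⟨β₀, -, hβ₀⟩ := hbad univ isOpen_univ (mem_univ y)
    have hqy : endpt x₀ (loopMem x₀ H) q = y := by rw [← hβ₀]; rfl
    -- every open set containing q contains mk ρ
    have claimC : ∀ O : Set (Xtilde x₀ (loopMem x₀ H)), IsOpen O → q ∈ O →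
        mkX x₀ (loopMem x₀ H) ⟨y, ρ⟩ ∈ O := by
      intro O hO hqO
      obtain ⟨S, hSmem, hqS, hSO⟩ :=
        (whisker_isBasis (x₀ := x₀) (H := H)).exists_subset_of_mem_open hqO hO
      obtain ⟨α, U, hUopen, hαU, rfl⟩ := hSmem
      obtain ⟨y2, β', hβ', hq'⟩ := hqS
      have hy2 : y = y2 := by rw [← hqy, hq']; rfl
      subst hy2
      have hyU : y ∈ U := hβ' ⟨1, β'.target⟩
      obtain ⟨β, hβU, hβq⟩ := hbad U hUopen hyU
      refine hSO ⟨y, β'.trans β.symm, ?_, ?_⟩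
      · rw [Path.trans_range]
        exact union_subset hβ' (by rw [Path.symm_range]; exact hβU)
      · calc mkX x₀ (loopMem x₀ H) ⟨y, ρ⟩
            = mkX x₀ (loopMem x₀ H) ⟨y, (ρ.trans β).trans β.symm⟩ := (mk_trans_symm ρ β).symm
          _ = mkX x₀ (loopMem x₀ H) ⟨y, (α.path.trans β').trans β.symm⟩ :=
              mk_trans_congr β.symm (by rw [hβq, hq'])
          _ = mkX x₀ (loopMem x₀ H) ⟨y, α.path.trans (β'.trans β.symm)⟩ := mk_trans_assoc _ _ _
    -- two lifts
    let f : I → Xtilde x₀ (loopMem x₀ H) := fun t => if t = 0 then q else mkX x₀ (loopMem x₀ H) ⟨y, ρ⟩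
    have hf : Continuous f := by
      rw [continuous_def]
      intro O hO
      by_cases hq : q ∈ O
      · have hρ : mkX x₀ (loopMem x₀ H) ⟨y, ρ⟩ ∈ O := claimC O hO hq
        have : f ⁻¹' O = univ := eq_univ_of_forall fun t => by
          by_cases ht : t = 0 <;> simp [f, ht, hq, hρ]
        rw [this]; exact isOpen_univ
      · by_cases hρ : mkX x₀ (loopMem x₀ H) ⟨y, ρ⟩ ∈ O
        · have : f ⁻¹' O = {(0 : I)}ᶜ := by
            ext t; by_cases ht : t = 0 <;> simp [f, ht, hq, hρ]
          rw [this]; exact isOpen_compl_singleton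
        · have : f ⁻¹' O = ∅ := by
            ext t; by_cases ht : t = 0 <;> simp [f, ht, hq, hρ]
          rw [this]; exact isOpen_empty
    have h10 : (1 : I) ≠ 0 := fun h => one_ne_zero (congrArg Subtype.val h)
    have hends : ∀ t : I, endpt x₀ (loopMem x₀ H)
        ((⟨fun _ => q, continuous_const⟩ : C(I, Xtilde x₀ (loopMem x₀ H))) t) =
        endpt x₀ (loopMem x₀ H) ((⟨f, hf⟩ : C(I, Xtilde x₀ (loopMem x₀ H))) t) := by
      intro t
      by_cases ht : t = 0 <;> simp [f, ht, hqy] <;> rfl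
    have h12 := hU ⟨fun _ => q, continuous_const⟩ ⟨f, hf⟩ (by simp [f]) hends
    have := congrArg (fun g : C(I, Xtilde x₀ (loopMem x₀ H)) => g 1) h12
    simpa [f, h10] using this
  -- Step B : finitely many fiber points, each non-bad one has a separating neighbourhood
  have stepB : ∀ q ∈ {q : Xtilde x₀ (loopMem x₀ H) | endpt x₀ (loopMem x₀ H) q = y} \
      {mkX x₀ (loopMem x₀ H) ⟨y, ρ⟩},
      ∃ V : Set X, IsOpen V ∧ y ∈ V ∧ ∀ β : Path y y, range ⇑β ⊆ V →
        mkX x₀ (loopMem x₀ H) ⟨y, ρ.trans β⟩ ≠ q := by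
    rintro q ⟨hq1, hq2⟩
    by_contra hcon
    push_neg at hcon
    exact hq2 (stepA q fun V hV hyV => by
      obtain ⟨β, hβ, hβq⟩ := hcon V hV hyV
      exact ⟨β, hβ, hβq⟩)
  choose! Vq hVq1 hVq2 hVq3 using stepB
  set B := {q : Xtilde x₀ (loopMem x₀ H) | endpt x₀ (loopMem x₀ H) q = y} \
      {mkX x₀ (loopMem x₀ H) ⟨y, ρ⟩} with hB
  refine ⟨⋂ q ∈ B, Vq q, hfin.diff.isOpen_biInter (fun q hq => hVq1 q hq), ?_, ?_⟩
  · exact mem_biInter fun q hq => hVq2 q hq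
  · intro β hβ
    by_contra hne
    have hmem : mkX x₀ (loopMem x₀ H) ⟨y, ρ.trans β⟩ ∈ B := ⟨rfl, hne⟩
    exact hVq3 _ hmem β (hβ.trans (biInter_subset_of_mem hmem)) rfl

end Fib3
/-! ### Stage 4: the endpoint projection is a local homeomorphism -/

section LH

variable {x₀ : X} {H : Subgroup (FundamentalGroup X x₀)}

lemma mk_eq_of_arr_eq {y : X} {δ δ' : Path x₀ y} (h : arr δ = arr δ') :
    mkX x₀ (loopMem x₀ H) ⟨y, δ⟩ = mkX x₀ (loopMem x₀ H) ⟨y, δ'⟩ := by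
  rw [mk_eq_mk_iff, h, CategoryTheory.Groupoid.comp_inv]
  exact fg_one_mem

lemma range_subset_iff_path {y z : X} (β : Path y z) {U : Set X} :
    range ⇑β ⊆ U ↔ ∀ t, β t ∈ U := by rw [range_subset_iff]

lemma endpt_isOpenMap [LocallyPathConnectedSpace X] :
    IsOpenMap (endpt x₀ (loopMem x₀ H)) := by
  intro W hW
  rw [isOpen_iff_forall_mem_open]
  rintro x ⟨q, hqW, rfl⟩
  obtain ⟨S, hSmem, hqS, hSW⟩ :=
    (whisker_isBasis (x₀ := x₀) (H := H)).exists_subset_of_mem_open hqW hW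
  obtain ⟨α, U, hUopen, hαU, rfl⟩ := hSmem
  obtain ⟨z₁, β, hβ, rfl⟩ := hqS
  have hz₁U : z₁ ∈ U := hβ ⟨1, β.target⟩
  refine ⟨pathComponentIn U z₁, ?_, hUopen.pathComponentIn z₁, mem_pathComponentIn_self hz₁U⟩
  intro z hz
  obtain ⟨β', hβ'⟩ : JoinedIn U z₁ z := hz
  refine ⟨mkX x₀ (loopMem x₀ H) ⟨z, (α.path.trans β).trans β'⟩, ?_, rfl⟩
  apply hSW
  apply whBasic_subset_of_mem (⟨z₁, β, hβ, rfl⟩ :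
    mkX x₀ (loopMem x₀ H) ⟨z₁, α.path.trans β⟩ ∈ whBasic x₀ (loopMem x₀ H) α U)
  exact ⟨z, β', (range_subset_iff_path β').2 hβ', rfl⟩

lemma endpt_isLocalHomeomorph [LocallyPathConnectedSpace X]
    (hU : UPLP x₀ (loopMem x₀ H))
    (hfin : {q : Xtilde x₀ (loopMem x₀ H) | endpt x₀ (loopMem x₀ H) q = x₀}.Finite) :
    IsLocalHomeomorph (endpt x₀ (loopMem x₀ H)) := by
  rw [isLocalHomeomorph_iff_isOpenEmbedding_restrict]
  intro q
  induction q using Quot.ind with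
  | _ a =>
  obtain ⟨y, ρ⟩ := a
  obtain ⟨V, hVopen, hyV, hstab⟩ := stable_nbhd hU ρ (fiber_finite_of_fiber_finite ρ hfin)
  set N := whBasic x₀ (loopMem x₀ H) ⟨y, ρ⟩ V with hN
  have hNopen : IsOpen N := whBasic_isOpen hVopen hyV
  have hqN : (mkX x₀ (loopMem x₀ H) ⟨y, ρ⟩) ∈ N := self_mem_whBasic hyV
  refine ⟨N, hNopen.mem_nhds hqN, ?_⟩
  have hinj : Set.InjOn (endpt x₀ (loopMem x₀ H)) N := by
    rintro q₁ ⟨z₁, β₁, hβ₁, rfl⟩ q₂ ⟨z₂, β₂, hβ₂, rfl⟩ hz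
    have hz' : z₁ = z₂ := hz
    subst hz'
    calc mkX x₀ (loopMem x₀ H) ⟨z₁, ρ.trans β₁⟩
        = mkX x₀ (loopMem x₀ H) ⟨z₁, (ρ.trans (β₁.trans β₂.symm)).trans β₂⟩ := by
          apply mk_eq_of_arr_eq
          simp [arr_trans, arr_symm, CategoryTheory.Groupoid.inv_eq_inv]
      _ = mkX x₀ (loopMem x₀ H) ⟨z₁, ρ.trans β₂⟩ := by
          apply mk_trans_congr
          apply hstab
          rw [Path.trans_range]
          exact union_subset hβ₁ (by rw [Path.symm_range]; exact hβ₂)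
  refine Topology.IsOpenEmbedding.of_continuous_injective_isOpenMap
    ((continuous_endpt).comp continuous_subtype_val) ?_ ?_
  · rintro ⟨q₁, h₁⟩ ⟨q₂, h₂⟩ h
    exact Subtype.ext (hinj h₁ h₂ h)
  · have : Set.domRestrict N (endpt x₀ (loopMem x₀ H)) =
        (endpt x₀ (loopMem x₀ H)) ∘ (Subtype.val : N → Xtilde x₀ (loopMem x₀ H)) := rfl
    rw [this]
    exact endpt_isOpenMap.comp hNopen.isOpenMap_subtype_val

end LH
/-! ### Stage 5: straight-line paths, contractibility of `I × I`, the standard lift -/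

section Seg

/-- The straight-line path in the unit interval. -/
noncomputable def segI (a b : I) : Path a b where
  toFun t := ⟨(1 - (t : ℝ)) * a + t * b, by
    have := (convex_Icc (0:ℝ) 1) a.2 b.2 (sub_nonneg.2 t.2.2) t.2.1 (by ring)
    simpa [smul_eq_mul] using this⟩
  continuous_toFun := by
    apply Continuous.subtype_mk
    exact ((continuous_const.sub continuous_subtype_val).mul continuous_const).add
      (continuous_subtype_val.mul continuous_const)
  source' := Subtype.ext (by simp)
  target' := Subtype.ext (by simp)

lemma segI_dist (a b : I) (t : I) : dist (segI a b t) a ≤ dist b a := by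
  have h1 : ((segI a b t : I) : ℝ) - a = t * ((b : ℝ) - a) := by
    show (1 - (t : ℝ)) * a + t * b - a = _
    ring
  rw [Subtype.dist_eq, Subtype.dist_eq, Real.dist_eq, Real.dist_eq, h1, abs_mul]
  calc |(t : ℝ)| * |(b : ℝ) - a| ≤ 1 * |(b : ℝ) - a| := by
        apply mul_le_mul_of_nonneg_right _ (abs_nonneg _)
        rw [abs_of_nonneg t.2.1]; exact t.2.2
    _ = |(b : ℝ) - a| := one_mul _

lemma segI_self (a : I) : segI a a = Path.refl a := by
  ext t
  show (1 - (t : ℝ)) * a + t * a = a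
  ring

/-- The straight-line path in the unit square. -/
noncomputable def segSq (z₁ z₂ : I × I) : Path z₁ z₂ :=
  (segI z₁.1 z₂.1).prod (segI z₁.2 z₂.2)

lemma segSq_dist (z₁ z₂ : I × I) (t : I) : dist (segSq z₁ z₂ t) z₁ ≤ dist z₂ z₁ := by
  have : segSq z₁ z₂ t = (segI z₁.1 z₂.1 t, segI z₁.2 z₂.2 t) := rfl
  rw [this, Prod.dist_eq, Prod.dist_eq]
  exact max_le_max (segI_dist _ _ _) (segI_dist _ _ _)

lemma segSq_self (z : I × I) : segSq z z = Path.refl z := by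
  unfold segSq
  rw [segI_self, segI_self]
  ext t
  all_goals rfl

instance : ContractibleSpace (I × I) := by
  have h : Convex ℝ ((Icc (0:ℝ) 1) ×ˢ (Icc (0:ℝ) 1)) :=
    (convex_Icc (0:ℝ) 1).prod (convex_Icc (0:ℝ) 1)
  have : ContractibleSpace ↥((Icc (0:ℝ) 1) ×ˢ (Icc (0:ℝ) 1)) :=
    h.contractibleSpace ⟨((0:ℝ), (0:ℝ)), ⟨⟨le_rfl, zero_le_one⟩, ⟨le_rfl, zero_le_one⟩⟩⟩
  exact ((Homeomorph.Set.prod (Icc (0:ℝ) 1) (Icc (0:ℝ) 1)).symm).contractibleSpace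

end Seg

section StdLift

variable {x₀ : X} {H : Subgroup (FundamentalGroup X x₀)}

lemma target_mem_of_mem_whBasic {α : PPath X x₀} {U : Set X} {y : X} {ρ : Path x₀ y}
    (h : mkX x₀ (loopMem x₀ H) ⟨y, ρ⟩ ∈ whBasic x₀ (loopMem x₀ H) α U) : y ∈ U := by
  obtain ⟨y2, β, hβ, hq⟩ := h
  have hy2 : y = y2 := target_eq_of_mk_eq hq
  subst hy2
  exact hβ ⟨1, β.target⟩

lemma mk_trans_homotopic_right {y z : X} (ρ : Path x₀ y) {β β' : Path y z}
    (h : β.Homotopic β') :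
    mkX x₀ (loopMem x₀ H) ⟨z, ρ.trans β⟩ = mkX x₀ (loopMem x₀ H) ⟨z, ρ.trans β'⟩ :=
  mk_eq_of_homotopic ((Path.Homotopic.refl ρ).hcomp h)

/-- The standard lift of a homotopy `Φ` through the endpoint projection, starting at the
class of `ρ`. -/
noncomputable def stdLift (Φ : C(I × I, X)) (ρ : Path x₀ (Φ (0, 0))) :
    I × I → Xtilde x₀ (loopMem x₀ H) := fun z =>
  mkX x₀ (loopMem x₀ H) ⟨Φ z, ρ.trans ((segSq (0, 0) z).map Φ.continuous)⟩

lemma endpt_stdLift (Φ : C(I × I, X)) (ρ : Path x₀ (Φ (0, 0))) (z : I × I) :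
    endpt x₀ (loopMem x₀ H) (stdLift (H := H) Φ ρ z) = Φ z := rfl

lemma stdLift_zero (Φ : C(I × I, X)) (ρ : Path x₀ (Φ (0, 0))) :
    stdLift (H := H) Φ ρ (0, 0) = mkX x₀ (loopMem x₀ H) ⟨Φ (0, 0), ρ⟩ := by
  unfold stdLift
  have h0 : ((0 : I × I)) = ((0, 0) : I × I) := rfl
  rw [segSq_self]
  have : (Path.refl ((0, 0) : I × I)).map Φ.continuous = Path.refl (Φ (0, 0)) := by
    ext t; rfl
  rw [this]
  exact mk_trans_refl ρ

lemma stdLift_continuous (Φ : C(I × I, X)) (ρ : Path x₀ (Φ (0, 0))) :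
    Continuous (stdLift (H := H) Φ ρ) := by
  rw [continuous_iff_continuousAt]
  intro z₁
  rw [continuousAt_def]
  intro A hA
  obtain ⟨O, hOA, hOopen, hfO⟩ := mem_nhds_iff.mp hA
  obtain ⟨S, hSmem, hqS, hSO⟩ :=
    (whisker_isBasis (x₀ := x₀) (H := H)).exists_subset_of_mem_open hfO hOopen
  obtain ⟨α, U, hUopen, hαU, rfl⟩ := hSmem
  have hz₁U : Φ z₁ ∈ U := target_mem_of_mem_whBasic hqS
  have hsub := whBasic_subset_of_mem hqS
  obtain ⟨ε, hε, hball⟩ := Metric.isOpen_iff.mp (hUopen.preimage Φ.continuous) z₁ hz₁U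
  refine mem_nhds_iff.mpr ⟨Metric.ball z₁ ε, ?_, Metric.isOpen_ball, Metric.mem_ball_self hε⟩
  intro z hz
  apply hOA
  apply hSO
  apply hsub
  refine ⟨Φ z, (segSq z₁ z).map Φ.continuous, ?_, ?_⟩
  · rw [range_subset_iff]
    intro t
    rw [Path.map_coe]
    apply hball
    rw [Metric.mem_ball]
    calc dist (segSq z₁ z t) z₁ ≤ dist z z₁ := segSq_dist z₁ z t
      _ < ε := hz
  · have h1 : (segSq ((0, 0) : I × I) z).Homotopic
        ((segSq (0, 0) z₁).trans (segSq z₁ z)) :=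
      SimplyConnectedSpace.paths_homotopic _ _
    have h2 := Path.Homotopic.map h1 Φ
    calc stdLift (H := H) Φ ρ z
        = mkX x₀ (loopMem x₀ H) ⟨Φ z, ρ.trans
            (((segSq (0, 0) z₁).trans (segSq z₁ z)).map Φ.continuous)⟩ :=
          mk_trans_homotopic_right ρ h2
      _ = mkX x₀ (loopMem x₀ H) ⟨Φ z, ρ.trans
            (((segSq (0, 0) z₁).map Φ.continuous).trans ((segSq z₁ z).map Φ.continuous))⟩ := by
          rw [Path.map_trans]
      _ = mkX x₀ (loopMem x₀ H) ⟨Φ z, (ρ.trans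
            ((segSq (0, 0) z₁).map Φ.continuous)).trans ((segSq z₁ z).map Φ.continuous)⟩ :=
          (mk_trans_assoc _ _ _).symm

/-- Uniqueness of lifts of maps on the square through the endpoint projection. -/
lemma square_lift_unique (hU : UPLP x₀ (loopMem x₀ H))
    (Ψ₁ Ψ₂ : C(I × I, Xtilde x₀ (loopMem x₀ H)))
    (h0 : Ψ₁ (0, 0) = Ψ₂ (0, 0))
    (hproj : ∀ z, endpt x₀ (loopMem x₀ H) (Ψ₁ z) = endpt x₀ (loopMem x₀ H) (Ψ₂ z)) :
    Ψ₁ = Ψ₂ := by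
  ext z
  have key := hU (Ψ₁.comp (segSq (0, 0) z).toContinuousMap)
      (Ψ₂.comp (segSq (0, 0) z).toContinuousMap) ?_ ?_
  · have := congrArg (fun g : C(I, Xtilde x₀ (loopMem x₀ H)) => g 1) key
    simpa using this
  · simpa using h0
  · intro t
    simpa using hproj ((segSq (0, 0) z) t)

/-- Existence and uniqueness of homotopy lifts through the endpoint projection. -/
lemma endpt_homotopyLift (hU : UPLP x₀ (loopMem x₀ H))
    (q₀ : Xtilde x₀ (loopMem x₀ H)) (Φ : C(I × I, X))
    (hΦ : Φ (0, 0) = endpt x₀ (loopMem x₀ H) q₀) :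
    ∃! Ψ : C(I × I, Xtilde x₀ (loopMem x₀ H)),
      Ψ (0, 0) = q₀ ∧ ∀ z, endpt x₀ (loopMem x₀ H) (Ψ z) = Φ z := by
  induction q₀ using Quot.ind with
  | _ a =>
  obtain ⟨w, ρ⟩ := a
  have hw : Φ (0, 0) = w := hΦ
  subst hw
  refine ⟨⟨stdLift (H := H) Φ ρ, stdLift_continuous Φ ρ⟩, ⟨stdLift_zero Φ ρ, fun z => rfl⟩, ?_⟩
  rintro Ψ ⟨hΨ0, hΨproj⟩
  exact square_lift_unique hU Ψ ⟨stdLift (H := H) Φ ρ, stdLift_continuous Φ ρ⟩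
    (by rw [hΨ0]; exact (stdLift_zero Φ ρ).symm) (fun z => by rw [hΨproj z]; rfl)

end StdLift
/-! ### Stage 6: continuity of the lifting operator (grid argument) -/

section Glue

lemma continuous_of_finite_closed_cover {A B : Type*} [TopologicalSpace A] [TopologicalSpace B]
    {f : A → B} {ι : Type*} [Finite ι] {s : ι → Set A} (hcov : ⋃ i, s i = univ)
    (hcl : ∀ i, IsClosed (s i)) (hf : ∀ i, ContinuousOn f (s i)) : Continuous f := by
  rw [continuous_iff_isClosed]
  intro C hC
  have hrepr : f ⁻¹' C = ⋃ i, s i ∩ f ⁻¹' C := by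
    rw [← iUnion_inter, hcov, univ_inter]
  rw [hrepr]
  refine isClosed_iUnion_of_finite fun i => ?_
  obtain ⟨u, hu, huu⟩ := (continuousOn_iff_isClosed.mp (hf i)) C hC
  rw [inter_comm (s i), huu]
  exact hu.inter (hcl i)

end Glue

section Grid

variable {E : Type u} [TopologicalSpace E] {p : E → X}

/-- The continuity of the square-lifting operator, for a local homeomorphism with unique
lifting of squares. -/
lemma contSquareLift (hLH : IsLocalHomeomorph p)
    (hLift : ∀ (e₀ : E) (Φ : C(I × I, X)), Φ (0, 0) = p e₀ →
      ∃! Ψ : C(I × I, E), Ψ (0, 0) = e₀ ∧ ∀ z, p (Ψ z) = Φ z) (e₀ : E) :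
    ∃ L : {Φ : C(I × I, X) // Φ (0, 0) = p e₀} → C(I × I, E),
      Continuous L ∧ ∀ Φ, (L Φ) (0, 0) = e₀ ∧ ∀ z, p ((L Φ) z) = (Φ : C(I × I, X)) z := by
  classical
  set T := {Φ : C(I × I, X) // Φ (0, 0) = p e₀} with hT
  have hex : ∀ Φ : T, ∃ Ψ : C(I × I, E), Ψ (0, 0) = e₀ ∧ ∀ z, p (Ψ z) = Φ.1 z :=
    fun Φ => (hLift e₀ Φ.1 Φ.2).exists
  choose L hL0 hLproj using hex
  have huniq : ∀ (Φ : T) (Ψ : C(I × I, E)),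
      Ψ (0, 0) = e₀ → (∀ z, p (Ψ z) = Φ.1 z) → Ψ = L Φ :=
    fun Φ Ψ h1 h2 => (hLift e₀ Φ.1 Φ.2).unique ⟨h1, h2⟩ ⟨hL0 Φ, hLproj Φ⟩
  refine ⟨L, ?_, fun Φ => ⟨hL0 Φ, hLproj Φ⟩⟩
  rw [continuous_iff_continuousAt]
  intro Φ₀
  set Ψ₀ := L Φ₀ with hΨ₀
  have hOpenMap := hLH.isOpenMap
  choose pe hpe_mem hpe_eq using hLH
  obtain ⟨t, ht0, htmono, ⟨n₀, hn₀⟩, hcell⟩ :=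
    exists_monotone_Icc_subset_open_cover_unitInterval_prod_self
      (c := fun x : E => ⇑Ψ₀ ⁻¹' (pe x).source)
      (fun x => (pe x).open_source.preimage Ψ₀.continuous)
      (fun z _ => mem_iUnion.2 ⟨Ψ₀ z, hpe_mem _⟩)
  choose zc hzc using hcell
  set eh : ℕ → ℕ → OpenPartialHomeomorph E X := fun n m => pe (zc n m) with heh
  set K : ℕ → ℕ → Set (I × I) :=
    fun n m => Icc (t n) (t (n + 1)) ×ˢ Icc (t m) (t (m + 1)) with hK
  have hK_closed : ∀ n m, IsClosed (K n m) := fun n m => isClosed_Icc.prod isClosed_Icc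
  have hK_cpt : ∀ n m, IsCompact (K n m) := fun n m => (hK_closed n m).isCompact
  have hΨ₀K : ∀ n m, ∀ z ∈ K n m, Ψ₀ z ∈ (eh n m).source := fun n m z hz => hzc n m hz
  have hpe' : ∀ n m (w : E), p w = (eh n m) w := fun n m w => congrFun (hpe_eq (zc n m)) w
  -- covering by cells with bounded index
  have hcover1 : ∀ s : I, ∃ n : ℕ, n ≤ n₀ ∧ s ∈ Icc (t n) (t (n + 1)) := by
    intro s
    by_cases h1 : s = 1
    · refine ⟨n₀, le_rfl, ?_⟩
      rw [h1, hn₀ n₀ le_rfl, hn₀ (n₀ + 1) (Nat.le_succ _)]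
      exact ⟨le_rfl, le_rfl⟩
    · set A := (Finset.range (n₀ + 1)).filter (fun n => t n ≤ s) with hA
      have h0A : 0 ∈ A := by
        rw [hA, Finset.mem_filter]
        exact ⟨Finset.mem_range.2 (Nat.succ_pos _), by rw [ht0]; exact s.2.1⟩
      set n := A.max' ⟨0, h0A⟩ with hn
      have hnA : n ∈ A := A.max'_mem _
      rw [hA, Finset.mem_filter, Finset.mem_range, Nat.lt_succ_iff] at hnA
      refine ⟨n, hnA.1, hnA.2, ?_⟩
      by_cases hcase : n = n₀
      · rw [hcase, hn₀ (n₀ + 1) (Nat.le_succ _)]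
        exact le_one'
      · have hnlt : n + 1 ≤ n₀ := Nat.succ_le_of_lt (lt_of_le_of_ne hnA.1 hcase)
        by_contra hc
        push_neg at hc
        have : n + 1 ∈ A := by
          rw [hA, Finset.mem_filter, Finset.mem_range, Nat.lt_succ_iff]
          exact ⟨hnlt, hc.le⟩
        have := A.le_max' _ this
        omega
  have hcover : ∀ z : I × I, ∃ nm : Fin (n₀ + 1) × Fin (n₀ + 1),
      z ∈ K nm.1 nm.2 := by
    intro z
    obtain ⟨n, hn, hz1⟩ := hcover1 z.1
    obtain ⟨m, hm, hz2⟩ := hcover1 z.2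
    exact ⟨(⟨n, Nat.lt_succ_of_le hn⟩, ⟨m, Nat.lt_succ_of_le hm⟩), hz1, hz2⟩
  choose cell hcellmem using hcover
  -- the compact-open neighbourhood
  set N : Set C(I × I, X) := ⋂ a : (Fin (n₀ + 1) × Fin (n₀ + 1)) × (Fin (n₀ + 1) × Fin (n₀ + 1)),
    {Φ | MapsTo ⇑Φ (K a.1.1 a.1.2 ∩ K a.2.1 a.2.2)
      (p '' ((eh a.1.1 a.1.2).source ∩ (eh a.2.1 a.2.2).source))} with hN
  have hNopen : IsOpen N := isOpen_iInter_of_finite fun a =>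
    ContinuousMap.isOpen_setOf_mapsTo ((hK_cpt _ _).inter_right (hK_closed _ _))
      (hOpenMap _ ((eh a.1.1 a.1.2).open_source.inter (eh a.2.1 a.2.2).open_source))
  have hΦ₀N : Φ₀.1 ∈ N := by
    rw [hN]
    refine mem_iInter.2 fun a => fun z hz => ?_
    exact ⟨Ψ₀ z, ⟨hΨ₀K _ _ z hz.1, hΨ₀K _ _ z hz.2⟩, hLproj Φ₀ z⟩
  -- the preferred inverse formula
  have key : ∀ (Φ : C(I × I, X)) (z : I × I) (n m : ℕ) (w : E),
      w ∈ (eh n m).source → p w = Φ z → (eh n m).symm (Φ z) = w := by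
    intro Φ z n m w hw hpw
    have : (eh n m) w = Φ z := by rw [← hpe' n m w]; exact hpw
    rw [← this, (eh n m).left_inv hw]
  set T' := {Φ : C(I × I, X) // Φ ∈ N ∧ Φ (0, 0) = p e₀} with hT'
  set u : T' × (I × I) → E :=
    fun q => (eh (cell q.2).1 (cell q.2).2).symm (q.1.1 q.2) with hu
  have hmemtgt : ∀ (Φ' : T') (z : I × I) (n m : Fin (n₀ + 1)), z ∈ K n m →
      Φ'.1 z ∈ p '' ((eh n m).source ∩ (eh (cell z).1 (cell z).2).source) := by
    rintro ⟨Φ, hΦN, hΦ0⟩ z n m hz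
    exact mem_iInter.1 hΦN ((n, m), cell z) ⟨hz, hcellmem z⟩
  have hu_eq : ∀ (Φ' : T') (z : I × I) (n m : Fin (n₀ + 1)), z ∈ K n m →
      u (Φ', z) = (eh n m).symm (Φ'.1 z) := by
    intro Φ' z n m hz
    obtain ⟨w, ⟨hw1, hw2⟩, hpw⟩ := hmemtgt Φ' z n m hz
    rw [hu]
    dsimp only
    rw [key _ _ _ _ w hw2 hpw, key _ _ _ _ w hw1 hpw]
  have htgt : ∀ (Φ' : T') (z : I × I) (n m : Fin (n₀ + 1)), z ∈ K n m →
      Φ'.1 z ∈ (eh n m).target := by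
    intro Φ' z n m hz
    obtain ⟨w, ⟨hw1, _⟩, hpw⟩ := hmemtgt Φ' z n m hz
    rw [← hpw, hpe' n m w]
    exact (eh n m).map_source hw1
  have heval : Continuous fun q : T' × (I × I) => q.1.1 q.2 :=
    continuous_eval.comp ((continuous_subtype_val.comp continuous_fst).prodMk continuous_snd)
  have hu_cont : Continuous u := by
    apply continuous_of_finite_closed_cover (ι := Fin (n₀ + 1) × Fin (n₀ + 1))
      (s := fun nm => univ ×ˢ K nm.1 nm.2)
    · refine eq_univ_of_forall fun q => ?_
      exact mem_iUnion.2 ⟨cell q.2, mem_univ _, hcellmem q.2⟩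
    · exact fun nm => isClosed_univ.prod (hK_closed _ _)
    · intro nm
      refine ContinuousOn.congr
        (f := fun q : T' × (I × I) => (eh nm.1 nm.2).symm (q.1.1 q.2)) ?_ ?_
      · refine (eh nm.1 nm.2).continuousOn_symm.comp heval.continuousOn ?_
        rintro ⟨Φ', z⟩ ⟨-, hz⟩
        exact htgt Φ' z nm.1 nm.2 hz
      · rintro ⟨Φ', z⟩ ⟨-, hz⟩
        exact hu_eq Φ' z nm.1 nm.2 hz
  set Λ : T' → C(I × I, E) := fun Φ' => (ContinuousMap.curry ⟨u, hu_cont⟩) Φ' with hΛ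
  have h00K : ((0, 0) : I × I) ∈ K (0 : Fin (n₀ + 1)) (0 : Fin (n₀ + 1)) := by
    have h0 : (0 : I) ∈ Icc (t 0) (t 1) := by
      exact ⟨by rw [ht0], by rw [← ht0]; exact htmono (Nat.zero_le 1)⟩
    exact ⟨by simpa using h0, by simpa using h0⟩
  have hΛ_eq : ∀ Φ' : T', Λ Φ' = L ⟨Φ'.1, Φ'.2.2⟩ := by
    intro Φ'
    apply huniq
    · show u (Φ', (0, 0)) = e₀
      rw [hu_eq Φ' (0, 0) 0 0 h00K]
      have he₀ : e₀ ∈ (eh (0 : Fin (n₀+1)) (0 : Fin (n₀+1))).source := by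
        have := hΨ₀K 0 0 (0, 0) h00K
        rwa [hL0 Φ₀] at this
      exact key _ _ _ _ e₀ he₀ Φ'.2.2.symm
    · intro z
      show p (u (Φ', z)) = Φ'.1 z
      rw [hu]
      dsimp only
      rw [hpe' (cell z).1 (cell z).2]
      exact (eh (cell z).1 (cell z).2).right_inv (htgt Φ' z (cell z).1 (cell z).2 (hcellmem z))
  have hV : {Φ : T | Φ.1 ∈ N} ∈ nhds Φ₀ :=
    (hNopen.preimage continuous_subtype_val).mem_nhds hΦ₀N
  refine ContinuousOn.continuousAt ?_ hV
  rw [continuousOn_iff_continuous_restrict]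
  have hrw : Set.domRestrict {Φ : T | Φ.1 ∈ N} L =
      fun q : {Φ : T | Φ.1 ∈ N} => Λ ⟨q.1.1, q.2, q.1.2⟩ := by
    funext q
    rw [hΛ_eq ⟨q.1.1, q.2, q.1.2⟩]
    rfl
  rw [hrw]
  exact (ContinuousMap.curry ⟨u, hu_cont⟩).continuous.comp
    (Continuous.subtype_mk (continuous_subtype_val.comp continuous_subtype_val) _)

end Grid
/-! ### Stage 7: assembly -/

section Assemble

variable {x₀ : X} {H : Subgroup (FundamentalGroup X x₀)}

/-- The continuous map `I → I × I`, `t ↦ (t, 0)`. -/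
noncomputable def botC : C(I, I × I) := ⟨fun t => (t, 0), by continuity⟩

/-- The first projection `I × I → I`. -/
noncomputable def fstC : C(I × I, I) := ⟨Prod.fst, continuous_fst⟩

lemma endpt_isSemicovering [LocallyPathConnectedSpace X] (hU : UPLP x₀ (loopMem x₀ H))
    (hfin : {q : Xtilde x₀ (loopMem x₀ H) | endpt x₀ (loopMem x₀ H) q = x₀}.Finite) :
    IsSemicovering (endpt x₀ (loopMem x₀ H)) := by
  have hLH := endpt_isLocalHomeomorph hU hfin
  have hSq : ∀ (e₀ : Xtilde x₀ (loopMem x₀ H)) (Φ : C(I × I, X)),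
      Φ (0, 0) = endpt x₀ (loopMem x₀ H) e₀ →
      ∃! Ψ : C(I × I, Xtilde x₀ (loopMem x₀ H)),
        Ψ (0, 0) = e₀ ∧ ∀ z, endpt x₀ (loopMem x₀ H) (Ψ z) = Φ z :=
    fun e₀ Φ hΦ => endpt_homotopyLift hU e₀ Φ hΦ
  refine ⟨hLH, ?_, ?_, fun y Φ hΦ => hSq y Φ hΦ, fun y => contSquareLift hLH hSq y⟩
  · -- path lifting
    intro y γ hγ
    obtain ⟨Ψ, ⟨hΨ0, hΨproj⟩, -⟩ := hSq y (γ.comp fstC) hγ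
    refine ⟨Ψ.comp botC, ⟨hΨ0, fun t => hΨproj (t, 0)⟩, ?_⟩
    rintro γh ⟨h0, hproj⟩
    exact hU γh (Ψ.comp botC) (by rw [h0]; exact hΨ0.symm)
      (fun t => by rw [hproj t]; exact (hΨproj (t, 0)).symm)
  · -- continuity of path lifting
    intro y
    obtain ⟨L, hLcont, hLspec⟩ := contSquareLift hLH hSq y
    refine ⟨fun γ => (L ⟨γ.1.comp fstC, γ.2⟩).comp botC, ?_, ?_⟩
    · apply (ContinuousMap.continuous_precomp botC).comp
      apply hLcont.comp
      exact Continuous.subtype_mk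
        ((ContinuousMap.continuous_precomp fstC).comp continuous_subtype_val) _
    · intro γ
      exact ⟨(hLspec ⟨γ.1.comp fstC, γ.2⟩).1, fun t => (hLspec ⟨γ.1.comp fstC, γ.2⟩).2 (t, 0)⟩

/-- Transport of the semicovering property along a homeomorphism of the total spaces. -/
lemma IsSemicovering.transport {Y Z : Type u} [TopologicalSpace Y] [TopologicalSpace Z]
    {q : Z → X} (hq : IsSemicovering q) (φ : Y ≃ₜ Z) {p : Y → X}
    (hpq : ∀ y, q (φ y) = p y) : IsSemicovering p := by
  have hpfun : p = q ∘ φ := funext fun y => (hpq y).symm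
  have hqy : ∀ z : Z, q z = p (φ.symm z) := fun z => by rw [← hpq (φ.symm z), φ.apply_symm_apply]
  constructor
  · rw [hpfun]
    exact hq.localHomeo.comp φ.isLocalHomeomorph
  · -- path lifting
    intro y γ hγ
    obtain ⟨γh, ⟨h0, hproj⟩, huq⟩ := hq.pathLift (φ y) γ (by rw [hγ, hpq])
    refine ⟨(⟨φ.symm, φ.symm.continuous⟩ : C(Z, Y)).comp γh, ⟨?_, ?_⟩, ?_⟩
    · show φ.symm (γh 0) = y
      rw [h0, φ.symm_apply_apply]
    · intro t
      show p (φ.symm (γh t)) = γ t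
      rw [← hqy, hproj]
    · rintro γ₂ ⟨h20, h2proj⟩
      have : (⟨φ, φ.continuous⟩ : C(Y, Z)).comp γ₂ = γh := by
        apply huq
        refine ⟨?_, fun t => ?_⟩
        · show φ (γ₂ 0) = φ y
          rw [h20]
        · show q (φ (γ₂ t)) = γ t
          rw [hpq, h2proj]
      ext t
      show γ₂ t = φ.symm (γh t)
      rw [← this]
      exact (φ.symm_apply_apply (γ₂ t)).symm
  · -- continuity of path lifting
    intro y
    obtain ⟨L, hLcont, hLspec⟩ := hq.contPathLift (φ y)
    refine ⟨fun γ => (⟨φ.symm, φ.symm.continuous⟩ : C(Z, Y)).comp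
        (L ⟨γ.1, by rw [γ.2, ← hpq]⟩), ?_, ?_⟩
    · apply (ContinuousMap.continuous_postcomp _).comp
      exact hLcont.comp (Continuous.subtype_mk continuous_subtype_val _)
    · intro γ
      refine ⟨?_, fun t => ?_⟩
      · show φ.symm (L _ 0) = y
        rw [(hLspec _).1, φ.symm_apply_apply]
      · show p (φ.symm (L _ t)) = γ.1 t
        rw [← hqy, (hLspec _).2]
  · -- homotopy lifting
    intro y Φ hΦ
    obtain ⟨Ψ, ⟨h0, hproj⟩, huq⟩ := hq.homotopyLift (φ y) Φ (by rw [hΦ, hpq])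
    refine ⟨(⟨φ.symm, φ.symm.continuous⟩ : C(Z, Y)).comp Ψ, ⟨?_, ?_⟩, ?_⟩
    · show φ.symm (Ψ (0, 0)) = y
      rw [h0, φ.symm_apply_apply]
    · intro z
      show p (φ.symm (Ψ z)) = Φ z
      rw [← hqy, hproj]
    · rintro Ψ₂ ⟨h20, h2proj⟩
      have : (⟨φ, φ.continuous⟩ : C(Y, Z)).comp Ψ₂ = Ψ := by
        apply huq
        refine ⟨?_, fun z => ?_⟩
        · show φ (Ψ₂ (0, 0)) = φ y
          rw [h20]
        · show q (φ (Ψ₂ z)) = Φ z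
          rw [hpq, h2proj]
      ext z
      show Ψ₂ z = φ.symm (Ψ z)
      rw [← this]
      exact (φ.symm_apply_apply (Ψ₂ z)).symm
  · -- continuity of homotopy lifting
    intro y
    obtain ⟨L, hLcont, hLspec⟩ := hq.contHomotopyLift (φ y)
    refine ⟨fun Φ => (⟨φ.symm, φ.symm.continuous⟩ : C(Z, Y)).comp
        (L ⟨Φ.1, by rw [Φ.2, ← hpq]⟩), ?_, ?_⟩
    · apply (ContinuousMap.continuous_postcomp _).comp
      exact hLcont.comp (Continuous.subtype_mk continuous_subtype_val _)
    · intro Φ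
      refine ⟨?_, fun z => ?_⟩
      · show φ.symm (L _ (0, 0)) = y
        rw [(hLspec _).1, φ.symm_apply_apply]
      · show p (φ.symm (L _ z)) = Φ.1 z
        rw [← hqy, (hLspec _).2]

end Assemble
/-- Let `p : X̂ → X` be an `lpc₀`-covering map with
`p₊π₁(X̂, x̂₀) = H ≤ π₁(X, x₀)`, where `X` is locally path connected and `H`-SLT at `x₀`.
If the fiber `p⁻¹(x₀)` is finite, then `p` is a semicovering map. -/
theorem statement19 {X Y : Type u} [TopologicalSpace X] [PathConnectedSpace X]
    [LocallyPathConnectedSpace X] [TopologicalSpace Y] (p : Y → X) (x₀ : X)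
    (H : Subgroup (FundamentalGroup X x₀)) (hcov : IsLpc0Covering p x₀ H)
    (hslt : IsHSLTAt x₀ H) (hfin : (p ⁻¹' {x₀}).Finite) :
    IsSemicovering p := by
  obtain ⟨φ, hφ⟩ := hcov.equiv
  have hfib : {q : Xtilde x₀ (loopMem x₀ H) | endpt x₀ (loopMem x₀ H) q = x₀}.Finite := by
    refine (hfin.image φ).subset ?_
    intro q hq
    refine ⟨φ.symm q, ?_, (φ.apply_symm_apply q)⟩
    show p (φ.symm q) ∈ ({x₀} : Set X)
    rw [← hφ (φ.symm q), φ.apply_symm_apply]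
    exact hq
  exact (endpt_isSemicovering hcov.uplp hfib).transport φ hφ

end SLTF
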